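/- Let ‖·‖ be a norm on ℝ^d, m ≠ 0, η > 0, and F̃ ≥ F_*. The unique minimizer of w ↦ max(F̃ + ⟨m, w − w₀⟩, F_*) + (1/(2η))‖w − w₀‖² is w₀ + min(η, (F̃ − F_*)/‖m‖_*²)·‖m‖_*·LMO(m). -/

import Mathlib

/-- Regularized Momo: the point
`w₀ + min(η, (F̃ - F_*)/‖m‖_*²) ‖m‖_* • LMO(m)` minimizes
`w ↦ max(F̃ + ⟨m, w - w₀⟩, F_*) + ‖w - w₀‖²/(2η)`. -/
theorem stmt_12 {d : ℕ} (N : (Fin d → ℝ) → ℝ)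
    (hN0 : ∀ x, N x = 0 ↔ x = 0)
    (hN1 : ∀ (a : ℝ) x, N (a • x) = |a| * N x)
    (hN2 : ∀ x y, N (x + y) ≤ N x + N y)
    (m w₀ : Fin d → ℝ) (hm : m ≠ 0) (η : ℝ) (hη : 0 < η)
    (Ft Fs : ℝ) (hF : Fs ≤ Ft)
    (s : ℝ)
    (hs : IsGreatest {r : ℝ | ∃ u : Fin d → ℝ, N u = 1 ∧ ∑ i, u i * m i = r} s)
    (l : Fin d → ℝ) (hl1 : N l = 1)
    (hl2 : ∀ u : Fin d → ℝ, N u = 1 → ∑ i, l i * m i ≤ ∑ i, u i * m i) :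
    let φ : (Fin d → ℝ) → ℝ := fun w =>
      max (Ft + ∑ i, m i * (w - w₀) i) Fs + (1 / (2 * η)) * (N (w - w₀)) ^ 2
    let p : Fin d → ℝ := w₀ + ((min η ((Ft - Fs) / s ^ 2)) * s) • l
    ∀ w : Fin d → ℝ, φ p ≤ φ w := by
  intro φ p w
  have hN0' : N 0 = 0 := (hN0 0).2 rfl
  have hNneg : ∀ x, N (-x) = N x := by
    intro x
    have := hN1 (-1) x
    simpa using this
  have hNnn : ∀ x, 0 ≤ N x := by
    intro x
    have h := hN2 x (-x)
    rw [add_neg_cancel, hN0', hNneg] at h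
    linarith
  have hNm : 0 < N m := by
    rcases lt_or_eq_of_le (hNnn m) with h | h
    · exact h
    · exact absurd ((hN0 m).1 h.symm) hm
  -- s > 0
  have hs_pos : 0 < s := by
    have hu : N ((N m)⁻¹ • m) = 1 := by
      rw [hN1, abs_of_pos (by positivity)]
      field_simp
    have h1 : ∑ i, ((N m)⁻¹ • m) i * m i ≤ s := hs.2 ⟨_, hu, rfl⟩
    have h2 : ∑ i, ((N m)⁻¹ • m) i * m i = (N m)⁻¹ * ∑ i, m i * m i := by
      rw [Finset.mul_sum]
      refine Finset.sum_congr rfl fun i _ => ?_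
      simp [mul_assoc]
    obtain ⟨i, hi⟩ : ∃ i, m i ≠ 0 := Function.ne_iff.1 hm
    have h3 : 0 < ∑ i, m i * m i :=
      Finset.sum_pos' (fun j _ => mul_self_nonneg _)
        ⟨i, Finset.mem_univ i, mul_self_pos.2 hi⟩
    have h4 : 0 < (N m)⁻¹ * ∑ i, m i * m i := by positivity
    rw [h2] at h1
    linarith
  -- ⟨l, m⟩ = -s
  have hlm : ∑ i, l i * m i = -s := by
    obtain ⟨u, hu1, hu2⟩ := hs.1
    have hneg : N (-u) = 1 := by rw [hNneg, hu1]
    have h1 : ∑ i, l i * m i ≤ ∑ i, (-u) i * m i := hl2 _ hneg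
    have h2 : ∑ i, (-u) i * m i = -s := by
      rw [← hu2, ← Finset.sum_neg_distrib]
      exact Finset.sum_congr rfl fun i _ => by simp
    have hnl : N (-l) = 1 := by rw [hNneg, hl1]
    have h3 : ∑ i, (-l) i * m i ≤ s := hs.2 ⟨_, hnl, rfl⟩
    have h4 : ∑ i, (-l) i * m i = -∑ i, l i * m i := by
      rw [← Finset.sum_neg_distrib]
      exact Finset.sum_congr rfl fun i _ => by simp
    rw [h4] at h3
    rw [h2] at h1
    linarith
  -- dual inequality
  have hdual : ∀ v : Fin d → ℝ, -(s * N v) ≤ ∑ i, m i * v i := by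
    intro v
    by_cases hv : v = 0
    · simp [hv, hN0']
    · have hNv : 0 < N v := by
        rcases lt_or_eq_of_le (hNnn v) with h | h
        · exact h
        · exact absurd ((hN0 v).1 h.symm) hv
      have hu : N ((N v)⁻¹ • (-v)) = 1 := by
        rw [hN1, hNneg, abs_of_pos (by positivity)]
        field_simp
      have h1 : ∑ i, ((N v)⁻¹ • (-v)) i * m i ≤ s := hs.2 ⟨_, hu, rfl⟩
      have h2 : ∑ i, ((N v)⁻¹ • (-v)) i * m i = -((N v)⁻¹ * ∑ i, m i * v i) := by
        rw [← neg_mul, Finset.mul_sum]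
        refine Finset.sum_congr rfl fun i _ => ?_
        simp
        ring
      rw [h2] at h1
      have h3 := mul_le_mul_of_nonneg_left (neg_le_of_neg_le h1) hNv.le
      rw [← mul_assoc, mul_inv_cancel₀ (ne_of_gt hNv), one_mul] at h3
      linarith
  set t : ℝ := min η ((Ft - Fs) / s ^ 2) with ht_def
  have ht0 : 0 ≤ t := le_min hη.le (div_nonneg (by linarith) (sq_nonneg s))
  have hts : t * s ^ 2 ≤ Ft - Fs := by
    have h := min_le_right η ((Ft - Fs) / s ^ 2)
    calc t * s ^ 2 ≤ ((Ft - Fs) / s ^ 2) * s ^ 2 :=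
          mul_le_mul_of_nonneg_right h (sq_nonneg s)
      _ = Ft - Fs := div_mul_cancel₀ _ (by positivity)
  -- compute pieces of φ p
  have hpw : p - w₀ = (t * s) • l := by
    funext i
    simp [p, ht_def]
  have hsum_p : ∑ i, m i * (p - w₀) i = t * s * (-s) := by
    rw [hpw, ← hlm, Finset.mul_sum]
    refine Finset.sum_congr rfl fun i _ => ?_
    simp
    ring
  have hN_p : N (p - w₀) = t * s := by
    rw [hpw, hN1, hl1, mul_one, abs_of_nonneg (by positivity)]
  have hmax_p : max (Ft + ∑ i, m i * (p - w₀) i) Fs = Ft - t * s ^ 2 := by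
    rw [hsum_p, max_eq_left (by nlinarith [hts])]
    ring
  have hφp : φ p = Ft - t * s ^ 2 + (1 / (2 * η)) * (t * s) ^ 2 := by
    simp only [φ, hmax_p, hN_p]
  -- lower bound for φ w
  set c : ℝ := ∑ i, m i * (w - w₀) i with hc_def
  set r : ℝ := N (w - w₀) with hr_def
  have hr0 : 0 ≤ r := hNnn _
  have hc : -(s * r) ≤ c := hdual _
  have hφw : φ w = max (Ft + c) Fs + (1 / (2 * η)) * r ^ 2 := rfl
  rw [hφp, hφw]
  have hk : (1 / (2 * η)) * (2 * η) = 1 := by field_simp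
  have hk0 : 0 < 1 / (2 * η) := by positivity
  have e1 : (1 / (2 * η)) * (η * s) ^ 2 = η * s ^ 2 / 2 := by
    field_simp
  have e2 : s * r ≤ η * s ^ 2 / 2 + (1 / (2 * η)) * r ^ 2 := by
    rw [← sub_nonneg]
    have h : η * s ^ 2 / 2 + 1 / (2 * η) * r ^ 2 - s * r = (η * s - r) ^ 2 / (2 * η) := by
      field_simp; ring
    rw [h]; positivity
  rcases le_total (Ft + c) Fs with hmax | hmax
  · rw [max_eq_right hmax]
    have hFr : Ft - s * r ≤ Fs := by linarith
    rcases min_cases η ((Ft - Fs) / s ^ 2) with ⟨he, hle⟩ | ⟨he, hle⟩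
    · -- t = η
      have hte : t = η := by rw [ht_def, he]
      have hle' : η * s ^ 2 ≤ Ft - Fs := by
        have := mul_le_mul_of_nonneg_right hle (sq_nonneg s)
        rwa [div_mul_cancel₀ _ (by positivity : s ^ 2 ≠ 0)] at this
      rw [hte]
      have hsr : 0 ≤ s * r := mul_nonneg hs_pos.le hr0
      linarith
    · -- t = (Ft-Fs)/s², and here Ft - Fs ≤ s*r
      have hts' : t * s ^ 2 = Ft - Fs := by
        rw [ht_def, he, div_mul_cancel₀ _ (by positivity : s ^ 2 ≠ 0)]
      have h1 : t * s ≤ r := by nlinarith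
      have hsq : (t * s) ^ 2 ≤ r ^ 2 :=
        pow_le_pow_left₀ (mul_nonneg ht0 hs_pos.le) h1 2
      have := mul_le_mul_of_nonneg_left hsq hk0.le
      linarith
  · rw [max_eq_left hmax]
    rcases min_cases η ((Ft - Fs) / s ^ 2) with ⟨he, hle⟩ | ⟨he, hle⟩
    · have hte : t = η := by rw [ht_def, he]
      rw [hte]
      linarith
    · have hts' : t * s ^ 2 = Ft - Fs := by
        rw [ht_def, he, div_mul_cancel₀ _ (by positivity : s ^ 2 ≠ 0)]
      have htη : t ≤ η := min_le_left _ _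
      rcases le_total r (t * s) with h | h
      · have hts'' : t * s ≤ η * s := mul_le_mul_of_nonneg_right htη hs_pos.le
        have hr2 : r + t * s ≤ 2 * (η * s) := by linarith
        have h2a := mul_le_mul_of_nonneg_left hr2 hk0.le
        have h2b : (1 / (2 * η)) * (2 * (η * s)) = s := by field_simp
        have h2 : 0 ≤ s - (1 / (2 * η)) * (r + t * s) := by linarith
        have hprod := mul_nonneg (sub_nonneg.2 h) h2
        have hexp : (t * s - r) * (s - (1 / (2 * η)) * (r + t * s)) =
            t * s ^ 2 - 1 / (2 * η) * (t * s) ^ 2 - s * r + 1 / (2 * η) * r ^ 2 := by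
          ring
        rw [hexp] at hprod
        linarith
      · have hc2 : -(t * s ^ 2) ≤ c := by rw [hts']; linarith
        have hsq : (t * s) ^ 2 ≤ r ^ 2 :=
          pow_le_pow_left₀ (mul_nonneg ht0 hs_pos.le) h 2
        have := mul_le_mul_of_nonneg_left hsq hk0.le
        linarith
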